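/- Consider 3 alternatives and utility functions u in the 2-simplex Δ = {u ∈ ℝ³ : u_i ≥ 0, u_1 + u_2 + u_3 = 1}. A voter votes for one alternative; given the two other voters' votes, the plurality winner with uniform random tiebreak determines the voter's expected utility. Call u manipulable if the voter's best-response vote depends on the other voters' votes (with β = 0, i.e., no cost of voting). Then the set of manipulable u has Lebesgue measure (relative area in the simplex) equal to 1/3 of the simplex. -/

import Mathlib

open MeasureTheory

/-- Expected utility of the plurality winner (uniform random tiebreak) with 3 voters:
our voter votes `a`, the opponents vote `b` and `c`. -/
noncomputable def pluralityEU (u : Fin 3 → ℝ) (a b c : Fin 3) : ℝ :=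
  if a = b then u a else if a = c then u a else if b = c then u b
  else (u a + u b + u c) / 3

/-- `a` is a best response (β = 0, no voting cost) against opponent votes `(b, c)`. -/
def BestResponse0 (u : Fin 3 → ℝ) (b c a : Fin 3) : Prop :=
  ∀ a', pluralityEU u a' b c ≤ pluralityEU u a b c

/-- `u` is manipulable: the best-response set depends on the others' votes, i.e. there
are two opponent profiles with disjoint best-response sets. -/
def Manipulable0 (u : Fin 3 → ℝ) : Prop :=
  ∃ b c b' c', ∀ a : Fin 3, ¬ (BestResponse0 u b c a ∧ BestResponse0 u b' c' a)

/-- Parametrization of the 2-simplex `{u ≥ 0, u₁ + u₂ + u₃ = 1}` by `(u₁, u₂) ∈ ℝ²`. -/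
noncomputable def simplexU (p : ℝ × ℝ) : Fin 3 → ℝ := ![p.1, p.2, 1 - p.1 - p.2]

/-- The parameter region corresponding to the 2-simplex. -/
def simplexRegion : Set (ℝ × ℝ) := {p | 0 ≤ p.1 ∧ 0 ≤ p.2 ∧ p.1 + p.2 ≤ 1}

lemma common_best (u : Fin 3 → ℝ) (hsum : u 0 + u 1 + u 2 = 1) (i : Fin 3)
    (hi : 1/3 ≤ u i) (hsmall : ∀ j, u j ≤ 1/3 ∨ j = i) (b c : Fin 3) :
    BestResponse0 u b c i := by
  intro a'
  have h0 := hsmall 0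
  have h1 := hsmall 1
  have h2 := hsmall 2
  fin_cases i <;> simp only [] at hi <;> simp at h0 h1 h2 <;>
    fin_cases b <;> fin_cases c <;> fin_cases a' <;>
      simp [pluralityEU] <;> linarith

lemma manip_iff (p : ℝ × ℝ) :
    Manipulable0 (simplexU p) ↔
      ((1/3 < p.1 ∧ 1/3 < p.2) ∨ (1/3 < p.1 ∧ p.1 + p.2 < 2/3) ∨
        (1/3 < p.2 ∧ p.1 + p.2 < 2/3)) := by
  obtain ⟨x, y⟩ := p
  simp only [Prod.fst, Prod.snd]
  constructor
  · contrapose!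
    rintro ⟨h1, h2, h3⟩ ⟨b, c, b', c', h⟩
    have hsum : simplexU (x, y) 0 + simplexU (x, y) 1 + simplexU (x, y) 2 = 1 := by
      simp [simplexU]; try ring
    have key : ∃ i, (1/3 ≤ simplexU (x, y) i) ∧ ∀ j, simplexU (x, y) j ≤ 1/3 ∨ j = i := by
      by_cases hx : 1/3 < x
      · refine ⟨0, by simpa [simplexU] using hx.le, ?_⟩
        intro j; fin_cases j <;> simp [simplexU] <;> try linarith [h2 hx, h1 hx]
      · by_cases hy : 1/3 < y
        · refine ⟨1, by simpa [simplexU] using hy.le, ?_⟩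
          intro j; fin_cases j <;> simp [simplexU] <;> try linarith [h3 hy]
        · push_neg at hx hy
          by_cases hz : 1 - x - y ≤ 1/3
          · refine ⟨0, by simp [simplexU]; linarith, ?_⟩
            intro j; fin_cases j <;> simp [simplexU] <;> linarith
          · push_neg at hz
            refine ⟨2, by simp [simplexU]; linarith, ?_⟩
            intro j; fin_cases j <;> simp [simplexU] <;> linarith
    obtain ⟨i, hi, hsmall⟩ := key
    exact h i ⟨common_best _ hsum i hi hsmall b c, common_best _ hsum i hi hsmall b' c'⟩
  · rintro (⟨hx, hy⟩ | ⟨hx, hz⟩ | ⟨hy, hz⟩)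
    · refine ⟨0, 2, 1, 2, ?_⟩
      intro a; rintro ⟨h1, h2⟩
      have ha := h1 0
      have hb := h2 1
      fin_cases a <;> simp [pluralityEU, simplexU] at ha hb <;> linarith
    · refine ⟨0, 1, 2, 1, ?_⟩
      intro a; rintro ⟨h1, h2⟩
      have ha := h1 0
      have hb := h2 2
      fin_cases a <;> simp [pluralityEU, simplexU] at ha hb <;> linarith
    · refine ⟨1, 0, 2, 0, ?_⟩
      intro a; rintro ⟨h1, h2⟩
      have ha := h1 1
      have hb := h2 2
      fin_cases a <;> simp [pluralityEU, simplexU] at ha hb <;> linarith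


open Set

@[reducible] def tri (a b c : ℝ) : Set (ℝ × ℝ) :=
  {p | a < p.1 ∧ b < p.2 ∧ p.1 + p.2 < a + b + c}

lemma meas_tri (a b c : ℝ) : MeasurableSet (tri a b c) := by
  have : IsOpen (tri a b c) :=
    (isOpen_lt continuous_const continuous_fst).inter
      ((isOpen_lt continuous_const continuous_snd).inter
        (isOpen_lt (continuous_fst.add continuous_snd) continuous_const))
  exact this.measurableSet

lemma vol_tri (a b c : ℝ) (hc : 0 ≤ c) :
    volume (tri a b c) = ENNReal.ofReal (c ^ 2 / 2) := by
  rw [Measure.volume_eq_prod, Measure.prod_apply (meas_tri a b c)]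
  have hslice : ∀ x : ℝ, Prod.mk x ⁻¹' tri a b c
      = if a < x then Ioo b (a + b + c - x) else ∅ := by
    intro x
    split_ifs with hx
    · ext y; simp [tri, hx, Ioo]; intro _; constructor <;> intro <;> linarith
    · ext y; simp [tri, hx]
  calc ∫⁻ x, volume (Prod.mk x ⁻¹' tri a b c)
      = ∫⁻ x, (Ioc a (a + c)).indicator (fun x => ENNReal.ofReal (a + c - x)) x := by
        refine lintegral_congr fun x => ?_
        rw [hslice x]
        by_cases hx : a < x
        · by_cases hx2 : x ≤ a + c
          · rw [if_pos hx, indicator_of_mem (show x ∈ Ioc a (a+c) from ⟨hx, hx2⟩),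
              Real.volume_Ioo]
            congr 1; ring
          · rw [if_pos hx, indicator_of_notMem (by simp [hx, hx2] : x ∉ Ioc a (a+c)),
              Real.volume_Ioo, ENNReal.ofReal_eq_zero.2 (by linarith)]
        · rw [if_neg hx, indicator_of_notMem (by simp [hx] : x ∉ Ioc a (a+c)), measure_empty]
    _ = ∫⁻ x in Ioc a (a + c), ENNReal.ofReal (a + c - x) := by
        rw [lintegral_indicator measurableSet_Ioc _]
    _ = ENNReal.ofReal (∫ x in Ioc a (a + c), (a + c - x)) := by
        rw [← ofReal_integral_eq_lintegral_ofReal]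
        · exact (continuous_const.sub continuous_id).integrableOn_Ioc
        · refine (ae_restrict_iff' measurableSet_Ioc).2 (ae_of_all _ fun x hx => ?_)
          simp only [Pi.zero_apply]
          linarith [hx.2]
    _ = ENNReal.ofReal (c ^ 2 / 2) := by
        congr 1
        rw [← intervalIntegral.integral_of_le (by linarith : a ≤ a + c)]
        have h1 : IntervalIntegrable (fun _ : ℝ => a + c) volume a (a + c) :=
          continuous_const.intervalIntegrable _ _
        have h2 : IntervalIntegrable (fun x : ℝ => x) volume a (a + c) :=
          continuous_id'.intervalIntegrable _ _
        rw [intervalIntegral.integral_sub h1 h2]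
        simp
        ring

lemma diag_null (k : ℝ) : volume {p : ℝ × ℝ | p.1 + p.2 = k} = 0 := by
  have hm : MeasurableSet {p : ℝ × ℝ | p.1 + p.2 = k} :=
    (isClosed_eq (continuous_fst.add continuous_snd) continuous_const).measurableSet
  rw [Measure.volume_eq_prod, Measure.prod_apply hm]
  have : ∀ x : ℝ, Prod.mk x ⁻¹' {p : ℝ × ℝ | p.1 + p.2 = k} = {k - x} := by
    intro x; ext y; simp; constructor <;> intro <;> linarith
  simp [this]

lemma vline_null (k : ℝ) : volume {p : ℝ × ℝ | p.1 = k} = 0 := by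
  have hm : MeasurableSet {p : ℝ × ℝ | p.1 = k} :=
    (isClosed_eq continuous_fst continuous_const).measurableSet
  rw [Measure.volume_eq_prod, Measure.prod_apply hm]
  have : ∀ x : ℝ, Prod.mk x ⁻¹' {p : ℝ × ℝ | p.1 = k} = if x = k then univ else ∅ := by
    intro x; split_ifs with h <;> ext y <;> simp [h]
  rw [lintegral_congr fun x => by rw [this x]]
  calc ∫⁻ x, volume (if x = k then (univ : Set ℝ) else ∅)
      = ∫⁻ x, ({k} : Set ℝ).indicator (fun _ => volume (univ : Set ℝ)) x := by
        refine lintegral_congr fun x => ?_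
        by_cases h : x = k <;> simp [h]
    _ = 0 := by
        rw [lintegral_indicator (measurableSet_singleton k) _]
        simp [Real.volume_singleton]

lemma hline_null (k : ℝ) : volume {p : ℝ × ℝ | p.2 = k} = 0 := by
  have hm : MeasurableSet {p : ℝ × ℝ | p.2 = k} :=
    (isClosed_eq continuous_snd continuous_const).measurableSet
  rw [Measure.volume_eq_prod, Measure.prod_apply hm]
  have : ∀ x : ℝ, Prod.mk x ⁻¹' {p : ℝ × ℝ | p.2 = k} = {k} := by
    intro x; ext y; simp
  simp [this]

lemma vol_squeeze {D S N : Set (ℝ × ℝ)} (h1 : D ⊆ S) (h2 : S ⊆ D ∪ N)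
    (hN : volume N = 0) : volume S = volume D := by
  refine le_antisymm ((measure_mono h2).trans ?_) (measure_mono h1)
  calc volume (D ∪ N) ≤ volume D + volume N := measure_union_le _ _
    _ = volume D := by rw [hN, add_zero]

lemma N_null :
    volume ({p : ℝ × ℝ | p.1 = 0} ∪ {p | p.2 = 0} ∪ {p | p.1 + p.2 = 1}) = 0 := by
  refine le_antisymm ?_ zero_le
  calc volume ({p : ℝ × ℝ | p.1 = 0} ∪ {p | p.2 = 0} ∪ {p | p.1 + p.2 = 1})
      ≤ volume ({p : ℝ × ℝ | p.1 = 0} ∪ {p | p.2 = 0}) + volume {p : ℝ × ℝ | p.1 + p.2 = 1} :=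
        measure_union_le _ _
    _ ≤ (volume {p : ℝ × ℝ | p.1 = 0} + volume {p : ℝ × ℝ | p.2 = 0}) +
          volume {p : ℝ × ℝ | p.1 + p.2 = 1} := by
        gcongr
        exact measure_union_le _ _
    _ = 0 := by rw [vline_null, hline_null, diag_null]; simp


/-- with β = 0, the manipulable utilities form 1/3 of the simplex
(in relative Lebesgue area). -/
theorem manipulable_area_beta_zero :
    volume {p ∈ simplexRegion | Manipulable0 (simplexU p)} =
      (1 / 3 : ENNReal) * volume simplexRegion := by
  classical
  have hreg : volume simplexRegion = ENNReal.ofReal (1/2) := by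
    have h1 : tri 0 0 1 ⊆ simplexRegion := by
      rintro ⟨x, y⟩ ⟨hx, hy, hxy⟩
      simp only [tri, mem_setOf_eq] at hx hy hxy
      exact ⟨hx.le, hy.le, by simp only; linarith⟩
    have h2 : simplexRegion ⊆ tri 0 0 1 ∪
        ({p : ℝ × ℝ | p.1 = 0} ∪ {p | p.2 = 0} ∪ {p | p.1 + p.2 = 1}) := by
      rintro ⟨x, y⟩ ⟨hx, hy, hxy⟩
      simp only [mem_setOf_eq] at hx hy hxy
      simp only [tri, mem_union, mem_setOf_eq]
      rcases eq_or_lt_of_le hx with h | h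
      · exact Or.inr (Or.inl (Or.inl h.symm))
      rcases eq_or_lt_of_le hy with h' | h'
      · exact Or.inr (Or.inl (Or.inr h'.symm))
      rcases eq_or_lt_of_le hxy with h'' | h''
      · exact Or.inr (Or.inr h'')
      · exact Or.inl ⟨h, h', by linarith⟩
    rw [vol_squeeze h1 h2 N_null, vol_tri 0 0 1 (by norm_num)]
    norm_num
  have hS : volume {p ∈ simplexRegion | Manipulable0 (simplexU p)} =
      volume (tri (1/3) (1/3) (1/3) ∪ tri (1/3) 0 (1/3) ∪ tri 0 (1/3) (1/3)) := by
    have h1 : tri (1/3) (1/3) (1/3) ∪ tri (1/3) 0 (1/3) ∪ tri 0 (1/3) (1/3) ⊆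
        {p ∈ simplexRegion | Manipulable0 (simplexU p)} := by
      rintro ⟨x, y⟩ hp
      simp only [tri, mem_union, mem_setOf_eq] at hp
      simp only [mem_setOf_eq, simplexRegion]
      rcases hp with (⟨hx, hy, hxy⟩ | ⟨hx, hy, hxy⟩) | ⟨hx, hy, hxy⟩ <;>
        refine ⟨⟨by linarith, by linarith, by linarith⟩, (manip_iff (x, y)).2 ?_⟩
      · exact Or.inl ⟨hx, hy⟩
      · exact Or.inr (Or.inl ⟨hx, by linarith⟩)
      · exact Or.inr (Or.inr ⟨hy, by linarith⟩)
    have h2 : {p ∈ simplexRegion | Manipulable0 (simplexU p)} ⊆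
        (tri (1/3) (1/3) (1/3) ∪ tri (1/3) 0 (1/3) ∪ tri 0 (1/3) (1/3)) ∪
        ({p : ℝ × ℝ | p.1 = 0} ∪ {p | p.2 = 0} ∪ {p | p.1 + p.2 = 1}) := by
      rintro ⟨x, y⟩ ⟨⟨hx, hy, hxy⟩, hm⟩
      rw [manip_iff (x, y)] at hm
      simp only [mem_setOf_eq] at hx hy hxy
      simp only [tri, mem_union, mem_setOf_eq]
      rcases hm with ⟨h1', h2'⟩ | ⟨h1', h2'⟩ | ⟨h1', h2'⟩
      · rcases eq_or_lt_of_le hxy with h | h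
        · exact Or.inr (Or.inr h)
        · exact Or.inl (Or.inl (Or.inl ⟨h1', h2', by linarith⟩))
      · rcases eq_or_lt_of_le hy with h | h
        · exact Or.inr (Or.inl (Or.inr h.symm))
        · exact Or.inl (Or.inl (Or.inr ⟨h1', h, by linarith⟩))
      · rcases eq_or_lt_of_le hx with h | h
        · exact Or.inr (Or.inl (Or.inl h.symm))
        · exact Or.inl (Or.inr ⟨h, h1', by linarith⟩)
    exact vol_squeeze h1 h2 N_null
  have hd23 : Disjoint (tri (1/3) 0 (1/3)) (tri 0 (1/3) (1/3)) := by
    rw [Set.disjoint_left]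
    rintro ⟨x, y⟩ hp hq
    simp only [tri, mem_setOf_eq] at hp hq
    obtain ⟨hx, hy, hxy⟩ := hp
    obtain ⟨hx', hy', hxy'⟩ := hq
    linarith
  have hd123 : Disjoint (tri (1/3) (1/3) (1/3)) (tri (1/3) 0 (1/3) ∪ tri 0 (1/3) (1/3)) := by
    rw [Set.disjoint_left]
    rintro ⟨x, y⟩ hp hq
    simp only [tri, mem_setOf_eq] at hp
    simp only [tri, mem_union, mem_setOf_eq] at hq
    obtain ⟨hx, hy, hxy⟩ := hp
    rcases hq with ⟨hx', hy', hxy'⟩ | ⟨hx', hy', hxy'⟩ <;> linarith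
  have hvol : volume (tri (1/3) (1/3) (1/3) ∪ tri (1/3) 0 (1/3) ∪ tri 0 (1/3) (1/3)) =
      ENNReal.ofReal (1/6) := by
    rw [Set.union_assoc, measure_union hd123 ((meas_tri _ _ _).union (meas_tri _ _ _)),
      measure_union hd23 (meas_tri _ _ _),
      vol_tri (1/3) (1/3) (1/3) (by norm_num), vol_tri (1/3) 0 (1/3) (by norm_num),
      vol_tri 0 (1/3) (1/3) (by norm_num)]
    rw [← ENNReal.ofReal_add (by norm_num) (by norm_num),
      ← ENNReal.ofReal_add (by norm_num) (by norm_num)]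
    norm_num
  rw [hS, hvol, hreg]
  rw [show (1/3 : ENNReal) = ENNReal.ofReal (1/3) by
    rw [ENNReal.ofReal_div_of_pos (by norm_num)]
    norm_num]
  rw [← ENNReal.ofReal_mul (by norm_num)]
  norm_num
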